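/- arXiv:1310.4845 — 4 statements merged into one kernel-verified Lean document; each statement's English description precedes it below -/
import Mathlib

section
/- Let f : ℝⁿ → ℝ be locally Lipschitz around a point x, and let (v,r) be a nonzero vector in the Whitney normal cone C(ℝⁿ⁺¹ \ epi(f), epi(f)) at the point (x, f(x)), where epi(f) = {(y,t) : f(y) ≤ t}. Then r ≤ f°(x,v), where f°(x,v) = limsup_{y→x, t↓0} (f(y+tv) - f(y))/t is the Clarke generalized directional derivative. (Here (v,r) ∈ C(A,B) at p means there exist sequences xₙ ∈ A, yₙ ∈ B, cₙ > 0 with xₙ → p, yₙ → p, and cₙ(xₙ - yₙ) → (v,r).) -/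
open Filter Set

noncomputable def clarkeDeriv {E : Type*} [NormedAddCommGroup E] [NormedSpace ℝ E]
    (f : E → ℝ) (x v : E) : ℝ :=
  Filter.limsup (fun p : E × ℝ => (f (p.1 + p.2 • v) - f p.1) / p.2)
    ((nhds x) ×ˢ (nhdsWithin 0 (Set.Ioi 0)))

noncomputable def clarkeSubdiff {E : Type*} [NormedAddCommGroup E] [InnerProductSpace ℝ E]
    (f : E → ℝ) (x : E) : Set E :=
  {ξ | ∀ v, (inner ℝ ξ v : ℝ) ≤ clarkeDeriv f x v}

def whitneyCone {E : Type*} [NormedAddCommGroup E] [NormedSpace ℝ E]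
    (A B : Set E) (p : E) : Set E :=
  {w | ∃ (x y : ℕ → E) (c : ℕ → ℝ), (∀ n, x n ∈ A) ∧ (∀ n, y n ∈ B) ∧ (∀ n, 0 < c n) ∧
    Filter.Tendsto x Filter.atTop (nhds p) ∧ Filter.Tendsto y Filter.atTop (nhds p) ∧
    Filter.Tendsto (fun n => c n • (x n - y n)) Filter.atTop (nhds w)}

def epi {E : Type*} (f : E → ℝ) : Set (E × ℝ) := {p | f p.1 ≤ p.2}

open Topology in
theorem stmt0 {n : ℕ} (f : EuclideanSpace ℝ (Fin n) → ℝ) (x : EuclideanSpace ℝ (Fin n))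
    (K : NNReal) (ε : ℝ) (hε : 0 < ε) (hf : LipschitzOnWith K f (Metric.ball x ε))
    (v : EuclideanSpace ℝ (Fin n)) (r : ℝ) (hvr : (v, r) ≠ (0 : EuclideanSpace ℝ (Fin n) × ℝ))
    (h : (v, r) ∈ whitneyCone (epi f)ᶜ (epi f) (x, f x)) :
    r ≤ clarkeDeriv f x v := by
  classical
  obtain ⟨X, Y, c, hX, hY, hc, hXlim, hYlim, hlim⟩ := h
  let E := EuclideanSpace ℝ (Fin n)
  set l : Filter (E × ℝ) := (nhds x) ×ˢ (nhdsWithin 0 (Set.Ioi 0)) with hl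
  set q : E × ℝ → ℝ := fun p => (f (p.1 + p.2 • v) - f p.1) / p.2 with hq
  -- norms
  have hnz : (0 : ℝ) < ‖((v, r) : E × ℝ)‖ := norm_pos_iff.2 hvr
  have hd : Tendsto (fun n => X n - Y n) atTop (𝓝 0) := by
    have := hXlim.sub hYlim; simpa using this
  have hdn : Tendsto (fun n => ‖X n - Y n‖) atTop (𝓝 0) := by
    simpa using hd.norm
  have hcn : Tendsto (fun n => ‖c n • (X n - Y n)‖) atTop (𝓝 ‖((v, r) : E × ℝ)‖) :=
    hlim.norm
  -- c tends to atTop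
  have hctop : Tendsto c atTop atTop := by
    rw [tendsto_atTop]
    intro M
    have hM' : (0:ℝ) < max M 1 := lt_of_lt_of_le one_pos (le_max_right _ _)
    have h1 : ∀ᶠ n in atTop, ‖((v, r) : E × ℝ)‖ / 2 < ‖c n • (X n - Y n)‖ :=
      hcn.eventually_const_lt (by linarith)
    have h2 : ∀ᶠ n in atTop, ‖X n - Y n‖ < ‖((v, r) : E × ℝ)‖ / (2 * max M 1) :=
      hdn.eventually_lt_const (by positivity)
    filter_upwards [h1, h2] with n h1 h2
    have hdpos : 0 < ‖X n - Y n‖ := by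
      by_contra hcon
      have : X n - Y n = 0 := by
        have := norm_nonneg (X n - Y n); have : ‖X n - Y n‖ = 0 := by linarith [not_lt.1 hcon]
        exact norm_eq_zero.1 this
      rw [this, smul_zero, norm_zero] at h1
      linarith
    have hsn : ‖c n • (X n - Y n)‖ = c n * ‖X n - Y n‖ := by
      rw [norm_smul, Real.norm_eq_abs, abs_of_pos (hc n)]
    have : max M 1 * ‖X n - Y n‖ < c n * ‖X n - Y n‖ := by
      calc max M 1 * ‖X n - Y n‖ < max M 1 * (‖((v, r) : E × ℝ)‖ / (2 * max M 1)) := by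
            exact mul_lt_mul_of_pos_left h2 hM'
        _ = ‖((v, r) : E × ℝ)‖ / 2 := by field_simp
        _ < c n * ‖X n - Y n‖ := by rw [← hsn]; exact h1
    have := lt_of_mul_lt_mul_right this hdpos.le
    exact le_trans (le_max_left _ _) this.le
  -- bounded above on the filter
  have hbdd : ∀ᶠ p in l, q p ≤ (K : ℝ) * ‖v‖ := by
    have hball : Metric.ball x (ε / 2) ∈ 𝓝 x := Metric.ball_mem_nhds x (by linarith)
    have ht0 : (0:ℝ) < ε / (2 * (‖v‖ + 1)) := by positivity
    have hIoo : Set.Ioo (0:ℝ) (ε / (2 * (‖v‖ + 1))) ∈ 𝓝[>] (0:ℝ) :=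
      Ioo_mem_nhdsGT_of_mem ⟨le_refl _, ht0⟩
    rw [hl]
    filter_upwards [Filter.prod_mem_prod hball hIoo] with p hp
    obtain ⟨hp1, hp2⟩ := hp
    have htpos : 0 < p.2 := hp2.1
    have htv : p.2 * ‖v‖ < ε / 2 := by
      calc p.2 * ‖v‖ ≤ p.2 * (‖v‖ + 1) := by nlinarith [norm_nonneg v]
        _ < ε / (2 * (‖v‖ + 1)) * (‖v‖ + 1) := by
            exact mul_lt_mul_of_pos_right hp2.2 (by positivity)
        _ = ε / 2 := by field_simp
    have hmem1 : p.1 ∈ Metric.ball x ε := by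
      have := Metric.mem_ball.1 hp1
      exact Metric.mem_ball.2 (lt_of_lt_of_le this (by linarith))
    have hmem2 : p.1 + p.2 • v ∈ Metric.ball x ε := by
      rw [Metric.mem_ball, dist_eq_norm]
      calc ‖p.1 + p.2 • v - x‖ ≤ ‖p.1 - x‖ + ‖p.2 • v‖ := by
            have : p.1 + p.2 • v - x = (p.1 - x) + p.2 • v := by abel
            rw [this]; exact norm_add_le _ _
        _ < ε / 2 + ε / 2 := by
            have h1 : ‖p.1 - x‖ < ε / 2 := by
              rw [← dist_eq_norm]; exact Metric.mem_ball.1 hp1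
            have h2 : ‖p.2 • v‖ < ε / 2 := by
              rw [norm_smul, Real.norm_eq_abs, abs_of_pos htpos]; exact htv
            linarith
        _ = ε := by ring
    have hlip := hf.dist_le_mul _ hmem2 _ hmem1
    have : f (p.1 + p.2 • v) - f p.1 ≤ (K : ℝ) * (p.2 * ‖v‖) := by
      have h1 : f (p.1 + p.2 • v) - f p.1 ≤ dist (f (p.1 + p.2 • v)) (f p.1) := by
        rw [Real.dist_eq]; exact le_abs_self _
      have h2 : dist (p.1 + p.2 • v) p.1 = p.2 * ‖v‖ := by
        rw [dist_eq_norm]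
        simp [norm_smul, Real.norm_eq_abs, abs_of_pos htpos]
      calc f (p.1 + p.2 • v) - f p.1 ≤ (K : ℝ) * dist (p.1 + p.2 • v) p.1 :=
            le_trans h1 hlip
        _ = (K : ℝ) * (p.2 * ‖v‖) := by rw [h2]
    calc q p = (f (p.1 + p.2 • v) - f p.1) / p.2 := rfl
      _ ≤ (K : ℝ) * (p.2 * ‖v‖) / p.2 := by
          exact div_le_div_of_nonneg_right this htpos.le |>.trans_eq rfl
      _ = (K : ℝ) * ‖v‖ := by field_simp
  have hbdd' : Filter.IsBoundedUnder (· ≤ ·) l q := ⟨(K : ℝ) * ‖v‖, Filter.eventually_map.2 hbdd⟩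
  -- the sequence in the filter
  set P : ℕ → E × ℝ := fun m => ((Y m).1, (c m)⁻¹) with hP
  have hY1 : Tendsto (fun m => (Y m).1) atTop (𝓝 x) := by
    have := (continuous_fst.tendsto _).comp hYlim
    simpa [Function.comp_def] using this
  have hX1 : Tendsto (fun m => (X m).1) atTop (𝓝 x) := by
    have := (continuous_fst.tendsto _).comp hXlim
    simpa [Function.comp_def] using this
  have hcinv : Tendsto (fun m => (c m)⁻¹) atTop (𝓝[>] (0:ℝ)) :=
    tendsto_inv_atTop_nhdsGT_zero.comp hctop
  have hPl : Tendsto P atTop l := hY1.prodMk hcinv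
  -- component limits
  have hlim1 : Tendsto (fun m => c m • ((X m).1 - (Y m).1)) atTop (𝓝 v) := by
    have := (continuous_fst.tendsto _).comp hlim
    simpa [Function.comp_def] using this
  have hlim2 : Tendsto (fun m => c m * ((X m).2 - (Y m).2)) atTop (𝓝 r) := by
    have := (continuous_snd.tendsto _).comp hlim
    simpa [Function.comp_def] using this
  set e : ℕ → ℝ := fun m => (K : ℝ) * ‖c m • ((X m).1 - (Y m).1) - v‖ with he
  have helim : Tendsto e atTop (𝓝 0) := by
    have h0 : Tendsto (fun m => c m • ((X m).1 - (Y m).1) - v) atTop (𝓝 0) := by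
      have := hlim1.sub (tendsto_const_nhds (x := v)); simpa using this
    have := h0.norm.const_mul (K : ℝ)
    simpa using this
  -- eventual main inequality
  have hmain : ∀ᶠ m in atTop, c m * ((X m).2 - (Y m).2) ≤ q (P m) + e m := by
    have hY1b : ∀ᶠ m in atTop, (Y m).1 ∈ Metric.ball x ε :=
      hY1 (Metric.ball_mem_nhds x hε)
    have hX1b : ∀ᶠ m in atTop, (X m).1 ∈ Metric.ball x ε :=
      hX1 (Metric.ball_mem_nhds x hε)
    have hYv : Tendsto (fun m => (Y m).1 + (c m)⁻¹ • v) atTop (𝓝 x) := by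
      have h0 : Tendsto (fun m => (c m)⁻¹ • v) atTop (𝓝 ((0:ℝ) • v)) :=
        (tendsto_inv_atTop_zero.comp hctop).smul_const v
      have := hY1.add h0
      simpa using this
    have hYvb : ∀ᶠ m in atTop, (Y m).1 + (c m)⁻¹ • v ∈ Metric.ball x ε :=
      hYv (Metric.ball_mem_nhds x hε)
    filter_upwards [hY1b, hX1b, hYvb] with m hY1b hX1b hYvb
    have hcm := hc m
    have hXe : f (X m).1 > (X m).2 := by
      have := hX m; simp only [epi, Set.mem_compl_iff, Set.mem_setOf_eq, not_le] at this
      exact this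
    have hYe : f (Y m).1 ≤ (Y m).2 := hY m
    have step1 : (X m).2 - (Y m).2 ≤ f (X m).1 - f (Y m).1 := by linarith
    have step2 : f (X m).1 - f ((Y m).1 + (c m)⁻¹ • v)
        ≤ (K : ℝ) * ‖(X m).1 - ((Y m).1 + (c m)⁻¹ • v)‖ := by
      have hlip := hf.dist_le_mul _ hX1b _ hYvb
      calc f (X m).1 - f ((Y m).1 + (c m)⁻¹ • v)
          ≤ dist (f (X m).1) (f ((Y m).1 + (c m)⁻¹ • v)) := by
            rw [Real.dist_eq]; exact le_abs_self _
        _ ≤ (K : ℝ) * dist (X m).1 ((Y m).1 + (c m)⁻¹ • v) := hlip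
        _ = (K : ℝ) * ‖(X m).1 - ((Y m).1 + (c m)⁻¹ • v)‖ := by rw [dist_eq_norm]
    have hqeq : q (P m) = c m * (f ((Y m).1 + (c m)⁻¹ • v) - f (Y m).1) := by
      simp only [hq, hP]
      rw [div_inv_eq_mul, mul_comm]
    have hnorm : c m * ‖(X m).1 - ((Y m).1 + (c m)⁻¹ • v)‖
        = ‖c m • ((X m).1 - (Y m).1) - v‖ := by
      have hns : ‖c m • ((X m).1 - ((Y m).1 + (c m)⁻¹ • v))‖
          = c m * ‖(X m).1 - ((Y m).1 + (c m)⁻¹ • v)‖ := by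
        rw [norm_smul, Real.norm_eq_abs, abs_of_pos hcm]
      rw [← hns]
      congr 1
      rw [smul_sub, smul_add, smul_inv_smul₀ (ne_of_gt hcm), smul_sub]
      abel
    calc c m * ((X m).2 - (Y m).2) ≤ c m * (f (X m).1 - f (Y m).1) :=
          mul_le_mul_of_nonneg_left step1 hcm.le
      _ = c m * (f ((Y m).1 + (c m)⁻¹ • v) - f (Y m).1)
          + c m * (f (X m).1 - f ((Y m).1 + (c m)⁻¹ • v)) := by ring
      _ ≤ q (P m) + e m := by
          rw [hqeq]
          gcongr
          calc c m * (f (X m).1 - f ((Y m).1 + (c m)⁻¹ • v))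
              ≤ c m * ((K : ℝ) * ‖(X m).1 - ((Y m).1 + (c m)⁻¹ • v)‖) :=
                mul_le_mul_of_nonneg_left step2 hcm.le
            _ = (K : ℝ) * (c m * ‖(X m).1 - ((Y m).1 + (c m)⁻¹ • v)‖) := by ring
            _ = e m := by rw [hnorm]
  -- conclude
  have key : ∀ δ > (0:ℝ), r - δ ≤ clarkeDeriv f x v := by
    intro δ hδ
    have hAe : Tendsto (fun m => c m * ((X m).2 - (Y m).2) - e m) atTop (𝓝 r) := by
      have := hlim2.sub helim; simpa using this
    have h1 : ∀ᶠ m in atTop, r - δ < c m * ((X m).2 - (Y m).2) - e m :=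
      hAe.eventually_const_lt (by linarith)
    have h2 : ∀ᶠ m in atTop, r - δ ≤ q (P m) := by
      filter_upwards [h1, hmain] with m h1 h2
      linarith
    have hfreq : ∃ᶠ p in l, r - δ ≤ q p :=
      hPl.frequently h2.frequently
    exact Filter.le_limsup_of_frequently_le hfreq hbdd'
  by_contra hcon
  push_neg at hcon
  have := key ((r - clarkeDeriv f x v) / 2) (by linarith)
  linarith
end

section
/- Let f : ℝⁿ → ℝ be convex (and hence locally Lipschitz). Then the Clarke subdifferential ∂_c f(x) coincides with the convex-analysis subdifferential {ξ : f(y) ≥ f(x) + ⟨ξ, y-x⟩ for all y}. -/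
open Filter Set

private lemma convex_quot_le {E : Type*} [NormedAddCommGroup E] [NormedSpace ℝ E] {f : E → ℝ}
    (hf : ConvexOn ℝ Set.univ f) (y v : E) {t : ℝ} (ht : 0 < t) (ht1 : t ≤ 1) :
    (f (y + t • v) - f y) / t ≤ f (y + v) - f y := by
  have h := hf.2 (mem_univ y) (mem_univ (y + v)) (by linarith : (0:ℝ) ≤ 1 - t) ht.le (by ring)
  have hpt : (1 - t) • y + t • (y + v) = y + t • v := by module
  rw [hpt] at h
  simp only [smul_eq_mul] at h
  rw [div_le_iff₀ ht]
  nlinarith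

private lemma convex_quot_ge {E : Type*} [NormedAddCommGroup E] [NormedSpace ℝ E] {f : E → ℝ}
    (hf : ConvexOn ℝ Set.univ f) (x v : E) {t : ℝ} (ht : 0 < t) :
    f x - f (x - v) ≤ (f (x + t • v) - f x) / t := by
  have h1t : (0:ℝ) < 1 + t := by linarith
  have h := hf.2 (mem_univ (x + t • v)) (mem_univ (x - v))
    (by positivity : (0:ℝ) ≤ 1/(1+t)) (by positivity : (0:ℝ) ≤ t/(1+t))
    (by field_simp)
  have hpt : (1/(1+t)) • (x + t • v) + (t/(1+t)) • (x - v) = x := by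
    match_scalars <;> field_simp <;> ring
  rw [hpt] at h
  simp only [smul_eq_mul] at h
  rw [le_div_iff₀ ht]
  have h' : f x * (1+t) ≤ (1/(1+t) * f (x + t • v) + t/(1+t) * f (x - v)) * (1+t) := by
    nlinarith
  field_simp at h'
  nlinarith

theorem stmt7 {n : ℕ} (f : EuclideanSpace ℝ (Fin n) → ℝ)
    (hf : ConvexOn ℝ Set.univ f) (x : EuclideanSpace ℝ (Fin n)) :
    clarkeSubdiff f x = {ξ | ∀ y, f x + (inner ℝ ξ (y - x) : ℝ) ≤ f y} := by
  have hcont : Continuous f :=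
    continuousOn_univ.1 (hf.continuousOn isOpen_univ)
  set L := (nhds x) ×ˢ (nhdsWithin (0:ℝ) (Set.Ioi 0)) with hLdef
  haveI : L.NeBot := by
    exact Filter.prod_neBot.2 ⟨inferInstance, inferInstance⟩
  have hslice : Tendsto (fun t : ℝ => (x, t)) (nhdsWithin (0:ℝ) (Set.Ioi 0)) L :=
    Filter.Tendsto.prodMk tendsto_const_nhds (tendsto_id.mono_right le_rfl)
  -- the quotient function
  have hbdd : ∀ v, L.IsBoundedUnder (· ≤ ·)
      (fun p : _ × ℝ => (f (p.1 + p.2 • v) - f p.1) / p.2) := by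
    intro v
    have hb : ∀ᶠ p : _ × ℝ in L, (f (p.1 + p.2 • v) - f p.1) / p.2 ≤ f (p.1 + v) - f p.1 := by
      have ht : ∀ᶠ p : _ × ℝ in L, p.2 ∈ Set.Ioc (0:ℝ) 1 :=
        tendsto_snd.eventually (Ioc_mem_nhdsGT_of_mem (by norm_num : (0:ℝ) ∈ Set.Ico (0:ℝ) 1))
      filter_upwards [ht] with p hp
      exact convex_quot_le hf p.1 v hp.1 hp.2
    have htend : Tendsto (fun p : _ × ℝ => f (p.1 + v) - f p.1) L
        (nhds (f (x + v) - f x)) := by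
      exact (((hcont.comp (continuous_id.add continuous_const)).sub hcont).tendsto x).comp
        tendsto_fst
    exact (htend.isBoundedUnder_le).mono_le hb |>.mono_le (Eventually.of_forall fun _ => le_rfl)
  have hcob : ∀ v, L.IsCoboundedUnder (· ≤ ·)
      (fun p : _ × ℝ => (f (p.1 + p.2 • v) - f p.1) / p.2) := by
    intro v
    apply Filter.IsCobounded.of_frequently_ge (l := f x - f (x - v))
    apply hslice.frequently (p := fun p : _ × ℝ => f x - f (x - v) ≤ (f (p.1 + p.2 • v) - f p.1) / p.2)
    apply Eventually.frequently
    filter_upwards [self_mem_nhdsWithin] with t (ht : t ∈ Set.Ioi (0:ℝ))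
    exact convex_quot_ge hf x v ht
  have hupper : ∀ v, clarkeDeriv f x v ≤ f (x + v) - f x := by
    intro v
    unfold clarkeDeriv
    have hb : ∀ᶠ p : _ × ℝ in L, (f (p.1 + p.2 • v) - f p.1) / p.2 ≤ f (p.1 + v) - f p.1 := by
      have ht : ∀ᶠ p : _ × ℝ in L, p.2 ∈ Set.Ioc (0:ℝ) 1 :=
        tendsto_snd.eventually (Ioc_mem_nhdsGT_of_mem (by norm_num : (0:ℝ) ∈ Set.Ico (0:ℝ) 1))
      filter_upwards [ht] with p hp
      exact convex_quot_le hf p.1 v hp.1 hp.2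
    have htend : Tendsto (fun p : _ × ℝ => f (p.1 + v) - f p.1) L
        (nhds (f (x + v) - f x)) :=
      (((hcont.comp (continuous_id.add continuous_const)).sub hcont).tendsto x).comp tendsto_fst
    calc Filter.limsup (fun p : _ × ℝ => (f (p.1 + p.2 • v) - f p.1) / p.2) L
        ≤ Filter.limsup (fun p : _ × ℝ => f (p.1 + v) - f p.1) L :=
          limsup_le_limsup hb (hcob v) htend.isBoundedUnder_le
      _ = f (x + v) - f x := htend.limsup_eq
  ext ξ
  constructor
  · intro hξ y
    have := (hξ (y - x)).trans (hupper (y - x))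
    have hxy : x + (y - x) = y := by abel
    rw [hxy] at this
    linarith
  · intro hξ v
    unfold clarkeDeriv
    apply le_limsup_of_frequently_le _ (hbdd v)
    apply hslice.frequently (p := fun p : _ × ℝ => (inner ℝ ξ v : ℝ) ≤ (f (p.1 + p.2 • v) - f p.1) / p.2)
    apply Eventually.frequently
    filter_upwards [self_mem_nhdsWithin] with t (ht : t ∈ Set.Ioi (0:ℝ))
    have h := hξ (x + t • v)
    have hv : (x + t • v) - x = t • v := by abel
    rw [hv, real_inner_smul_right] at h
    rw [le_div_iff₀ ht]
    linarith
end

section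
/- Let f : ℝ² → ℝ be given by f(x,y) = |x| + |y| - √(x²+y²). At every point (x,y) with x ≠ 0, y ≠ 0, f is differentiable with gradient (sign(x) - x/√(x²+y²), sign(y) - y/√(x²+y²)), and the set of all limits of gradients df(xᵢ,yᵢ) over sequences (xᵢ,yᵢ) → (0,0) with xᵢ ≠ 0 ≠ yᵢ is contained in {(a,b) : b = ±1 ∓ √((2-|a|)|a|), |a| ≤ 1} ∪ {(a,b) : a = ±1 ∓ √((2-|b|)|b|), |b| ≤ 1}. -/
open Filter Set

noncomputable def f10 : ℝ × ℝ → ℝ := fun p => |p.1| + |p.2| - Real.sqrt (p.1 ^ 2 + p.2 ^ 2)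

noncomputable def grad10 : ℝ × ℝ → ℝ × ℝ := fun p =>
  (Real.sign p.1 - p.1 / Real.sqrt (p.1 ^ 2 + p.2 ^ 2),
   Real.sign p.2 - p.2 / Real.sqrt (p.1 ^ 2 + p.2 ^ 2))

lemma part1 (p : ℝ × ℝ) (hx : p.1 ≠ 0) (hy : p.2 ≠ 0) :
    HasFDerivAt f10
      ((grad10 p).1 • ContinuousLinearMap.fst ℝ ℝ ℝ +
       (grad10 p).2 • ContinuousLinearMap.snd ℝ ℝ ℝ) p := by
  have hs : p.1 ^ 2 + p.2 ^ 2 ≠ 0 := by positivity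
  have hr : Real.sqrt (p.1 ^ 2 + p.2 ^ 2) ≠ 0 := by positivity
  have hr2 : Real.sqrt (p.1 ^ 2 + p.2 ^ 2) ^ 2 = p.1 ^ 2 + p.2 ^ 2 :=
    Real.sq_sqrt (by positivity)
  have hfst : HasFDerivAt (fun q : ℝ × ℝ => q.1) (ContinuousLinearMap.fst ℝ ℝ ℝ) p :=
    hasFDerivAt_fst
  have hsnd : HasFDerivAt (fun q : ℝ × ℝ => q.2) (ContinuousLinearMap.snd ℝ ℝ ℝ) p :=
    hasFDerivAt_snd
  have h1 := hfst.abs hx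
  have h2 := hsnd.abs hy
  have hg : HasFDerivAt (fun q : ℝ × ℝ => q.1 ^ 2 + q.2 ^ 2)
      ((p.1 • ContinuousLinearMap.fst ℝ ℝ ℝ + p.1 • ContinuousLinearMap.fst ℝ ℝ ℝ) +
       (p.2 • ContinuousLinearMap.snd ℝ ℝ ℝ + p.2 • ContinuousLinearMap.snd ℝ ℝ ℝ)) p := by
    have := (hfst.mul hfst).add (hsnd.mul hsnd)
    simp only [pow_two]
    exact this
  have h3 := hg.sqrt hs
  have hfull := (h1.add h2).sub h3
  have hsign1 : (SignType.sign p.1 : ℝ) = Real.sign p.1 := by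
    rcases hx.lt_or_gt with h | h
    · simp [h, Real.sign_of_neg h]
    · simp [h, Real.sign_of_pos h]
  have hsign2 : (SignType.sign p.2 : ℝ) = Real.sign p.2 := by
    rcases hy.lt_or_gt with h | h
    · simp [h, Real.sign_of_neg h]
    · simp [h, Real.sign_of_pos h]
  have heq : (grad10 p).1 • ContinuousLinearMap.fst ℝ ℝ ℝ +
      (grad10 p).2 • ContinuousLinearMap.snd ℝ ℝ ℝ =
      ((SignType.sign p.1 : ℝ) • ContinuousLinearMap.fst ℝ ℝ ℝ +
       (SignType.sign p.2 : ℝ) • ContinuousLinearMap.snd ℝ ℝ ℝ) -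
      (1 / (2 * Real.sqrt (p.1 ^ 2 + p.2 ^ 2))) •
        ((p.1 • ContinuousLinearMap.fst ℝ ℝ ℝ + p.1 • ContinuousLinearMap.fst ℝ ℝ ℝ) +
         (p.2 • ContinuousLinearMap.snd ℝ ℝ ℝ + p.2 • ContinuousLinearMap.snd ℝ ℝ ℝ)) := by
    ext <;>
    · simp only [grad10, ContinuousLinearMap.add_apply, ContinuousLinearMap.smul_apply,
        ContinuousLinearMap.sub_apply, ContinuousLinearMap.coe_comp', Function.comp_apply,
        smul_eq_mul, ContinuousLinearMap.coe_fst', ContinuousLinearMap.coe_snd',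
        ContinuousLinearMap.inl_apply, ContinuousLinearMap.inr_apply]
      rw [hsign1, hsign2]
      field_simp
      ring
  rw [heq]
  exact hfull

lemma key (p : ℝ × ℝ) (hx : p.1 ≠ 0) (hy : p.2 ≠ 0) :
    (1 - |(grad10 p).1|) ^ 2 + (1 - |(grad10 p).2|) ^ 2 = 1 ∧
    |(grad10 p).1| ≤ 1 ∧ |(grad10 p).2| ≤ 1 := by
  set r := Real.sqrt (p.1 ^ 2 + p.2 ^ 2) with hrdef
  have hrpos : 0 < r := Real.sqrt_pos.2 (by positivity)
  have hr2 : r ^ 2 = p.1 ^ 2 + p.2 ^ 2 := Real.sq_sqrt (by positivity)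
  have hxr : |p.1| ≤ r := by
    rw [hrdef, ← Real.sqrt_sq_eq_abs]
    exact Real.sqrt_le_sqrt (by nlinarith)
  have hyr : |p.2| ≤ r := by
    rw [hrdef, ← Real.sqrt_sq_eq_abs]
    exact Real.sqrt_le_sqrt (by nlinarith)
  have ha : |(grad10 p).1| = 1 - |p.1| / r := by
    have h1 : (grad10 p).1 = Real.sign p.1 * (1 - |p.1| / r) := by
      simp only [grad10]
      rcases hx.lt_or_gt with h | h
      · rw [Real.sign_of_neg h, abs_of_neg h]; field_simp; ring
      · rw [Real.sign_of_pos h, abs_of_pos h]; field_simp; rw [hrdef]; ring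
    rw [h1, abs_mul]
    have : |Real.sign p.1| = 1 := by
      rcases hx.lt_or_gt with h | h
      · simp [Real.sign_of_neg h]
      · simp [Real.sign_of_pos h]
    rw [this, one_mul, abs_of_nonneg]
    have := div_le_one_of_le₀ hxr hrpos.le
    linarith
  have hb : |(grad10 p).2| = 1 - |p.2| / r := by
    have h1 : (grad10 p).2 = Real.sign p.2 * (1 - |p.2| / r) := by
      simp only [grad10]
      rcases hy.lt_or_gt with h | h
      · rw [Real.sign_of_neg h, abs_of_neg h]; field_simp; ring
      · rw [Real.sign_of_pos h, abs_of_pos h]; field_simp; rw [hrdef]; ring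
    rw [h1, abs_mul]
    have : |Real.sign p.2| = 1 := by
      rcases hy.lt_or_gt with h | h
      · simp [Real.sign_of_neg h]
      · simp [Real.sign_of_pos h]
    rw [this, one_mul, abs_of_nonneg]
    have := div_le_one_of_le₀ hyr hrpos.le
    linarith
  have habs1 : |p.1| ^ 2 = p.1 ^ 2 := sq_abs _
  have habs2 : |p.2| ^ 2 = p.2 ^ 2 := sq_abs _
  refine ⟨?_, ?_, ?_⟩
  · rw [ha, hb]
    have : (|p.1| / r) ^ 2 + (|p.2| / r) ^ 2 = 1 := by
      field_simp
      nlinarith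
    nlinarith [this]
  · rw [ha]
    have : 0 ≤ |p.1| / r := by positivity
    linarith
  · rw [hb]
    have : 0 ≤ |p.2| / r := by positivity
    linarith

lemma alg (a b : ℝ) (h : (1 - |a|) ^ 2 + (1 - |b|) ^ 2 = 1) (_ha : |a| ≤ 1) (hb : |b| ≤ 1) :
    b = 1 - Real.sqrt ((2 - |a|) * |a|) ∨ b = -1 + Real.sqrt ((2 - |a|) * |a|) := by
  have hsq : (1 - |b|) ^ 2 = (2 - |a|) * |a| := by nlinarith
  have h1 : Real.sqrt ((2 - |a|) * |a|) = 1 - |b| := by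
    rw [← hsq, Real.sqrt_sq (by linarith)]
  rcases abs_cases b with ⟨h2, _⟩ | ⟨h2, _⟩
  · left; rw [h1]; linarith
  · right; rw [h1]; linarith

theorem stmt10 :
    (∀ p : ℝ × ℝ, p.1 ≠ 0 → p.2 ≠ 0 →
      HasFDerivAt f10
        ((grad10 p).1 • ContinuousLinearMap.fst ℝ ℝ ℝ +
         (grad10 p).2 • ContinuousLinearMap.snd ℝ ℝ ℝ) p) ∧
    {q : ℝ × ℝ | ∃ z : ℕ → ℝ × ℝ, (∀ n, (z n).1 ≠ 0 ∧ (z n).2 ≠ 0) ∧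
        Filter.Tendsto z Filter.atTop (nhds (0, 0)) ∧
        Filter.Tendsto (fun n => grad10 (z n)) Filter.atTop (nhds q)} ⊆
      {q : ℝ × ℝ | (q.2 = 1 - Real.sqrt ((2 - |q.1|) * |q.1|) ∨
                    q.2 = -1 + Real.sqrt ((2 - |q.1|) * |q.1|)) ∧ |q.1| ≤ 1} ∪
      {q : ℝ × ℝ | (q.1 = 1 - Real.sqrt ((2 - |q.2|) * |q.2|) ∨
                    q.1 = -1 + Real.sqrt ((2 - |q.2|) * |q.2|)) ∧ |q.2| ≤ 1} := by
  constructor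
  · exact part1
  · rintro q ⟨z, hnz, -, hg⟩
    have hkey := fun n => key (z n) (hnz n).1 (hnz n).2
    have hg1 : Tendsto (fun n => (grad10 (z n)).1) atTop (nhds q.1) :=
      ((continuous_fst.tendsto q).comp hg)
    have hg2 : Tendsto (fun n => (grad10 (z n)).2) atTop (nhds q.2) :=
      ((continuous_snd.tendsto q).comp hg)
    have hq1 : |q.1| ≤ 1 := by
      refine le_of_tendsto ((continuous_abs.tendsto q.1).comp hg1) ?_
      exact Filter.Eventually.of_forall fun n => (hkey n).2.1
    have hq2 : |q.2| ≤ 1 := by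
      refine le_of_tendsto ((continuous_abs.tendsto q.2).comp hg2) ?_
      exact Filter.Eventually.of_forall fun n => (hkey n).2.2
    have hsum : (1 - |q.1|) ^ 2 + (1 - |q.2|) ^ 2 = 1 := by
      have hcont : Tendsto (fun n => (1 - |(grad10 (z n)).1|) ^ 2 + (1 - |(grad10 (z n)).2|) ^ 2)
          atTop (nhds ((1 - |q.1|) ^ 2 + (1 - |q.2|) ^ 2)) := by
        exact (((tendsto_const_nhds.sub ((continuous_abs.tendsto q.1).comp hg1)).pow 2).add
          ((tendsto_const_nhds.sub ((continuous_abs.tendsto q.2).comp hg2)).pow 2))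
      have hconst : Tendsto (fun n => (1 - |(grad10 (z n)).1|) ^ 2 + (1 - |(grad10 (z n)).2|) ^ 2)
          atTop (nhds 1) := by
        simp only [fun n => (hkey n).1]
        exact tendsto_const_nhds
      exact tendsto_nhds_unique hcont hconst
    exact Or.inl ⟨alg q.1 q.2 hsum hq1 hq2, hq1⟩
end

section
/- Let f : ℝⁿ → ℝ be locally Lipschitz at x and let L : ℝᵐ → ℝⁿ be continuously differentiable at a point u with L(u) = x. Then for every v ∈ ℝᵐ, (f∘L)°(u,v) ≤ f°(x, dL(u)v), and consequently ∂_c(f∘L)(u) ⊆ {dL(u)ᵀ ξ : ξ ∈ ∂_c f(x)} (the chain rule inclusion for Clarke subdifferentials). -/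
open Filter Set

section Aux
variable {E : Type*} [NormedAddCommGroup E] [NormedSpace ℝ E]

/-- the difference quotient -/
noncomputable def cq (f : E → ℝ) (v : E) (p : E × ℝ) : ℝ :=
  (f (p.1 + p.2 • v) - f p.1) / p.2

noncomputable def cF (x : E) : Filter (E × ℝ) := (nhds x) ×ˢ (nhdsWithin 0 (Set.Ioi 0))

instance (x : E) : (cF x).NeBot := by
  unfold cF; infer_instance

lemma cq_bound {f : E → ℝ} {x : E} {s : Set E} (hs : s ∈ nhds x) {K : NNReal}
    (hK : LipschitzOnWith K f s) (v : E) :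
    ∀ᶠ p in cF x, |cq f v p| ≤ K * ‖v‖ := by
  obtain ⟨r, hr, hball⟩ := Metric.mem_nhds_iff.1 hs
  have h1 : ∀ᶠ y in nhds x, y ∈ Metric.ball x (r / 2) :=
    Metric.ball_mem_nhds _ (by positivity)
  have h2 : ∀ᶠ t : ℝ in nhdsWithin 0 (Set.Ioi 0), 0 < t ∧ t * ‖v‖ < r / 2 := by
    have ht : Tendsto (fun t : ℝ => t * ‖v‖) (nhdsWithin 0 (Set.Ioi 0)) (nhds 0) := by
      have := (tendsto_id.mul_const ‖v‖ :
        Tendsto (fun t : ℝ => t * ‖v‖) (nhds 0) (nhds (0 * ‖v‖)))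
      rw [zero_mul] at this
      exact this.mono_left nhdsWithin_le_nhds
    filter_upwards [self_mem_nhdsWithin, ht.eventually (eventually_lt_nhds (by positivity : (0:ℝ) < r/2))] with t h1 h2
    exact ⟨h1, h2⟩
  filter_upwards [h1.prod_mk h2] with p hp
  obtain ⟨hy, ht, htv⟩ : _ ∧ _ ∧ _ := ⟨hp.1, hp.2.1, hp.2.2⟩
  have hnv : ‖p.2 • v‖ = p.2 * ‖v‖ := by
    rw [norm_smul, Real.norm_eq_abs, abs_of_pos ht]
  have hy_s : p.1 ∈ s := hball (by
    have : dist p.1 x < r / 2 := hy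
    exact Metric.mem_ball.2 (lt_of_lt_of_le this (by linarith)))
  have hyv_s : p.1 + p.2 • v ∈ s := hball (by
    have h3 : dist (p.1 + p.2 • v) x ≤ ‖p.2 • v‖ + dist p.1 x := by
      calc dist (p.1 + p.2 • v) x ≤ dist (p.1 + p.2 • v) p.1 + dist p.1 x := dist_triangle _ _ _
        _ = ‖p.2 • v‖ + dist p.1 x := by rw [dist_eq_norm, add_sub_cancel_left]
    have hb : dist p.1 x < r / 2 := hy
    exact Metric.mem_ball.2 (by rw [hnv] at h3; linarith))
  have hd : dist (f (p.1 + p.2 • v)) (f p.1) ≤ K * dist (p.1 + p.2 • v) p.1 :=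
    (lipschitzOnWith_iff_dist_le_mul.1 hK) _ hyv_s _ hy_s
  have hdd : dist (p.1 + p.2 • v) p.1 = p.2 * ‖v‖ := by
    rw [dist_eq_norm, add_sub_cancel_left, hnv]
  rw [hdd] at hd
  rw [cq, abs_div, abs_of_pos ht, div_le_iff₀ ht]
  calc |f (p.1 + p.2 • v) - f p.1| = dist (f (p.1 + p.2 • v)) (f p.1) := by
        rw [Real.dist_eq]
    _ ≤ K * (p.2 * ‖v‖) := hd
    _ = K * ‖v‖ * p.2 := by ring

end Aux

section Aux2
variable {E : Type*} [NormedAddCommGroup E] [NormedSpace ℝ E]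

lemma ev_bddAbove {α : Type*} {F : Filter α} {h : α → ℝ} {C : ℝ}
    (ev : ∀ᶠ p in F, |h p| ≤ C) : F.IsBoundedUnder (· ≤ ·) h :=
  ⟨C, ev.mono fun p hp => (abs_le.1 hp).2⟩

lemma ev_bddBelow {α : Type*} {F : Filter α} {h : α → ℝ} {C : ℝ}
    (ev : ∀ᶠ p in F, |h p| ≤ C) : F.IsBoundedUnder (· ≥ ·) h :=
  ⟨-C, ev.mono fun p hp => (abs_le.1 hp).1⟩

lemma ev_cobdd {α : Type*} {F : Filter α} [F.NeBot] {h : α → ℝ} {C : ℝ}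
    (ev : ∀ᶠ p in F, |h p| ≤ C) : F.IsCoboundedUnder (· ≤ ·) h :=
  (ev_bddBelow ev).isCoboundedUnder_le

lemma limsup_comp_le {α β : Type*} {F : Filter α} {G : Filter β} [F.NeBot] {m : α → β}
    (hm : Filter.Tendsto m F G) {h : β → ℝ} {C : ℝ} (ev : ∀ᶠ p in G, |h p| ≤ C) :
    Filter.limsup (fun p => h (m p)) F ≤ Filter.limsup h G := by
  apply le_of_forall_gt_imp_ge_of_dense
  intro a ha
  have hb : F.IsCoboundedUnder (· ≤ ·) fun p => h (m p) := ev_cobdd (hm.eventually ev)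
  have hub : ∀ᶠ p in G, h p < a := eventually_lt_of_limsup_lt ha (ev_bddAbove ev)
  exact Filter.limsup_le_of_le hb ((hm.eventually hub).mono fun p hp => hp.le)

lemma clarkeDeriv_eq (f : E → ℝ) (x v : E) :
    clarkeDeriv f x v = Filter.limsup (cq f v) (cF x) := rfl

lemma clarkeDeriv_zero (f : E → ℝ) (x : E) : clarkeDeriv f x 0 = 0 := by
  rw [clarkeDeriv_eq]
  have h : cq f (0 : E) = fun _ => (0 : ℝ) := by
    funext p; simp [cq]
  rw [h]
  exact Filter.limsup_const 0

lemma clarkeDeriv_comp_le {f : E → ℝ} {x : E} {s : Set E} (hs : s ∈ nhds x) {K : NNReal}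
    (hK : LipschitzOnWith K f s) (v : E) {α : Type*} {F : Filter α} [F.NeBot] {m : α → E × ℝ}
    (hm : Filter.Tendsto m F (cF x)) :
    Filter.limsup (fun p => cq f v (m p)) F ≤ clarkeDeriv f x v :=
  limsup_comp_le hm (cq_bound hs hK v)

lemma tendsto_mul_pos (c : ℝ) (hc : 0 < c) :
    Filter.Tendsto (fun t : ℝ => c * t) (nhdsWithin 0 (Set.Ioi 0)) (nhdsWithin 0 (Set.Ioi 0)) := by
  apply tendsto_nhdsWithin_of_tendsto_nhds_of_eventually_within
  · have h := (tendsto_id.const_mul c : Filter.Tendsto (fun t : ℝ => c * t) (nhds 0) (nhds (c * 0)))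
    rw [mul_zero] at h
    exact h.mono_left nhdsWithin_le_nhds
  · filter_upwards [self_mem_nhdsWithin] with t ht
    exact mul_pos hc ht

lemma clarkeDeriv_smul_le {f : E → ℝ} {x : E} {s : Set E} (hs : s ∈ nhds x) {K : NNReal}
    (hK : LipschitzOnWith K f s) {c : ℝ} (hc : 0 < c) (v : E) :
    clarkeDeriv f x (c • v) ≤ c * clarkeDeriv f x v := by
  have hτ : Filter.Tendsto (fun p : E × ℝ => (p.1, c * p.2)) (cF x) (cF x) :=
    Filter.Tendsto.prodMap tendsto_id (tendsto_mul_pos c hc)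
  have hid : ∀ p : E × ℝ, cq f (c • v) p = c * cq f v (p.1, c * p.2) := by
    intro p
    simp only [cq]
    rw [smul_smul, mul_comm p.2 c]
    rw [← mul_div_assoc, mul_div_mul_left _ _ (ne_of_gt hc)]
  have hbdd := (hτ.eventually (cq_bound hs hK v) :
    ∀ᶠ p in cF x, |cq f v ((fun p : E × ℝ => (p.1, c * p.2)) p)| ≤ K * ‖v‖)
  rw [clarkeDeriv_eq]
  have heq : Filter.limsup (cq f (c • v)) (cF x) =
      Filter.limsup (fun p : E × ℝ => c * cq f v (p.1, c * p.2)) (cF x) := by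
    congr 1; funext p; exact hid p
  rw [heq]
  have hmono : Monotone (fun r : ℝ => c * r) := fun a b hab =>
    mul_le_mul_of_nonneg_left hab hc.le
  have hmap := hmono.map_limsup_of_continuousAt
    (F := cF x) (a := fun p : E × ℝ => cq f v (p.1, c * p.2))
    (continuous_const.mul continuous_id).continuousAt (ev_bddAbove hbdd) (ev_cobdd hbdd)
  have : Filter.limsup (fun p : E × ℝ => c * cq f v (p.1, c * p.2)) (cF x) =
      c * Filter.limsup (fun p : E × ℝ => cq f v (p.1, c * p.2)) (cF x) := hmap.symm
  rw [this]
  exact mul_le_mul_of_nonneg_left (clarkeDeriv_comp_le hs hK v hτ) hc.le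

lemma clarkeDeriv_smul {f : E → ℝ} {x : E} {s : Set E} (hs : s ∈ nhds x) {K : NNReal}
    (hK : LipschitzOnWith K f s) {c : ℝ} (hc : 0 < c) (v : E) :
    clarkeDeriv f x (c • v) = c * clarkeDeriv f x v := by
  refine le_antisymm (clarkeDeriv_smul_le hs hK hc v) ?_
  have h2 := clarkeDeriv_smul_le hs hK (inv_pos.2 hc) (c • v)
  rw [inv_smul_smul₀ (ne_of_gt hc)] at h2
  have := mul_le_mul_of_nonneg_left h2 hc.le
  rw [← mul_assoc, mul_inv_cancel₀ (ne_of_gt hc), one_mul] at this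
  exact this

lemma clarkeDeriv_add_le {f : E → ℝ} {x : E} {s : Set E} (hs : s ∈ nhds x) {K : NNReal}
    (hK : LipschitzOnWith K f s) (z w : E) :
    clarkeDeriv f x (z + w) ≤ clarkeDeriv f x z + clarkeDeriv f x w := by
  have hσ : Filter.Tendsto (fun p : E × ℝ => (p.1 + p.2 • z, p.2)) (cF x) (cF x) := by
    apply Filter.Tendsto.prodMk
    · have h1 : Filter.Tendsto (fun p : E × ℝ => p.1) (cF x) (nhds x) := tendsto_fst
      have h2 : Filter.Tendsto (fun p : E × ℝ => p.2) (cF x) (nhds (0 : ℝ)) :=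
        tendsto_snd.mono_right nhdsWithin_le_nhds
      have h3 : Filter.Tendsto (fun p : E × ℝ => p.1 + p.2 • z) (cF x) (nhds (x + (0:ℝ) • z)) :=
        h1.add (h2.smul_const z)
      rw [zero_smul, add_zero] at h3
      exact h3
    · exact tendsto_snd
  have hid : cq f (z + w) = (fun p : E × ℝ => cq f w (p.1 + p.2 • z, p.2)) + cq f z := by
    funext p
    simp only [cq, Pi.add_apply]
    have h : p.1 + p.2 • (z + w) = (p.1 + p.2 • z) + p.2 • w := by
      rw [smul_add, add_assoc]
    rw [h]
    ring
  have hb1 := (hσ.eventually (cq_bound hs hK w) :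
    ∀ᶠ p in cF x, |cq f w ((fun p : E × ℝ => (p.1 + p.2 • z, p.2)) p)| ≤ K * ‖w‖)
  have hb2 := cq_bound hs hK z
  rw [clarkeDeriv_eq, hid]
  calc Filter.limsup ((fun p : E × ℝ => cq f w (p.1 + p.2 • z, p.2)) + cq f z) (cF x)
      ≤ Filter.limsup (fun p : E × ℝ => cq f w (p.1 + p.2 • z, p.2)) (cF x) +
        Filter.limsup (cq f z) (cF x) :=
        limsup_add_le (ev_bddBelow hb1) (ev_bddAbove hb1) (ev_cobdd hb2) (ev_bddAbove hb2)
    _ ≤ clarkeDeriv f x w + clarkeDeriv f x z := by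
        exact add_le_add (clarkeDeriv_comp_le hs hK w hσ) le_rfl
    _ = clarkeDeriv f x z + clarkeDeriv f x w := by ring

end Aux2

section PartA
variable {E F' : Type*} [NormedAddCommGroup E] [NormedSpace ℝ E]
  [NormedAddCommGroup F'] [NormedSpace ℝ F']

lemma comp_lipschitz {f : F' → ℝ} {L : E → F'} {u : E} {x : F'} (hx : L u = x)
    {A : E →L[ℝ] F'} (hL : HasStrictFDerivAt L A u)
    {s : Set F'} (hs : s ∈ nhds x) {K : NNReal} (hK : LipschitzOnWith K f s) :
    ∃ s' ∈ nhds u, ∃ K' : NNReal, LipschitzOnWith K' (f ∘ L) s' := by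
  obtain ⟨K₁, t, ht, hlipL⟩ := hL.exists_lipschitzOnWith
  have hLc : Filter.Tendsto L (nhds u) (nhds x) := by
    have := hL.continuousAt.tendsto
    rwa [hx] at this
  refine ⟨t ∩ L ⁻¹' s, Filter.inter_mem ht (hLc hs), K * K₁, ?_⟩
  exact hK.comp (hlipL.mono inter_subset_left) fun y hy => hy.2

lemma partA {f : F' → ℝ} {L : E → F'} {u : E} {x : F'} (hx : L u = x)
    {A : E →L[ℝ] F'} (hL : HasStrictFDerivAt L A u)
    {s : Set F'} (hs : s ∈ nhds x) {K : NNReal} (hK : LipschitzOnWith K f s) (v : E) :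
    clarkeDeriv (f ∘ L) u v ≤ clarkeDeriv f x (A v) := by
  obtain ⟨s', hs', K', hK'⟩ := comp_lipschitz hx hL hs hK
  have hLc : Filter.Tendsto L (nhds u) (nhds x) := by
    have := hL.continuousAt.tendsto
    rwa [hx] at this
  set m : E × ℝ → F' × ℝ := fun p => (L p.1, p.2) with hm_def
  have hm : Filter.Tendsto m (cF u) (cF x) := Filter.Tendsto.prodMap hLc tendsto_id
  have hbg := (hm.eventually (cq_bound hs hK (A v)) :
    ∀ᶠ p in cF u, |cq f (A v) (m p)| ≤ K * ‖A v‖)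
  have hblhs := cq_bound hs' hK' v
  apply le_of_forall_pos_le_add
  intro ε hε
  set δ : ℝ := ε / ((K + 1) * (‖v‖ + 1)) with hδ_def
  have hδ : 0 < δ := by
    apply div_pos hε
    positivity
  -- little-o estimate pulled back
  have hlo := hL.isLittleO.def hδ
  have hh : Filter.Tendsto (fun p : E × ℝ => (p.1 + p.2 • v, p.1)) (cF u) (nhds (u, u)) := by
    rw [nhds_prod_eq]
    apply Filter.Tendsto.prodMk
    · have h1 : Filter.Tendsto (fun p : E × ℝ => p.1) (cF u) (nhds u) := tendsto_fst
      have h2 : Filter.Tendsto (fun p : E × ℝ => p.2) (cF u) (nhds (0 : ℝ)) :=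
        tendsto_snd.mono_right nhdsWithin_le_nhds
      have h3 := h1.add (h2.smul_const v)
      rwa [zero_smul, add_zero] at h3
    · exact tendsto_fst
  have hev1 : ∀ᶠ p : E × ℝ in cF u,
      ‖L (p.1 + p.2 • v) - L p.1 - A (p.2 • v)‖ ≤ δ * ‖p.2 • v‖ := by
    filter_upwards [hh.eventually hlo] with p hp
    simpa [add_sub_cancel_left] using hp
  have tendsto_yv : Filter.Tendsto (fun p : E × ℝ => p.1 + p.2 • v) (cF u) (nhds u) := by
    have h1 : Filter.Tendsto (fun p : E × ℝ => p.1) (cF u) (nhds u) := tendsto_fst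
    have h2 : Filter.Tendsto (fun p : E × ℝ => p.2) (cF u) (nhds (0 : ℝ)) :=
      tendsto_snd.mono_right nhdsWithin_le_nhds
    have h3 := h1.add (h2.smul_const v)
    rwa [zero_smul, add_zero] at h3
  have hevA : ∀ᶠ p : E × ℝ in cF u, L (p.1 + p.2 • v) ∈ s := (hLc.comp tendsto_yv) hs
  have hevB : ∀ᶠ p : E × ℝ in cF u, L p.1 ∈ s := (hLc.comp tendsto_fst) hs
  have hevC : ∀ᶠ p : E × ℝ in cF u, L p.1 + p.2 • (A v) ∈ s := by
    have h2 : Filter.Tendsto (fun p : E × ℝ => p.2) (cF u) (nhds (0 : ℝ)) :=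
      tendsto_snd.mono_right nhdsWithin_le_nhds
    have hT := (hLc.comp (tendsto_fst : Filter.Tendsto _ (cF u) _)).add (h2.smul_const (A v))
    rw [zero_smul, add_zero] at hT
    exact hT hs
  have hevt : ∀ᶠ p : E × ℝ in cF u, 0 < p.2 := by
    have : ∀ᶠ t : ℝ in nhdsWithin 0 (Set.Ioi 0), 0 < t := eventually_mem_nhdsWithin
    exact (tendsto_snd : Filter.Tendsto _ (cF u) _).eventually this
  have hKd : (K : ℝ) * (δ * ‖v‖) ≤ ε := by
    have hδε : δ * ((K + 1) * (‖v‖ + 1)) = ε := by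
      rw [hδ_def]; field_simp
    nlinarith [norm_nonneg v, K.coe_nonneg, hδ.le]
  have hev : ∀ᶠ p : E × ℝ in cF u, cq (f ∘ L) v p ≤ cq f (A v) (m p) + ε := by
    filter_upwards [hev1, hevA, hevB, hevC, hevt] with p h1 h2 h3 h4 h5
    have hac : dist (L (p.1 + p.2 • v)) (L p.1 + p.2 • A v) ≤ δ * (p.2 * ‖v‖) := by
      rw [dist_eq_norm]
      have heq : L (p.1 + p.2 • v) - (L p.1 + p.2 • A v)
          = L (p.1 + p.2 • v) - L p.1 - A (p.2 • v) := by
        rw [map_smul, sub_add_eq_sub_sub]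
      rw [heq]
      calc ‖L (p.1 + p.2 • v) - L p.1 - A (p.2 • v)‖ ≤ δ * ‖p.2 • v‖ := h1
        _ = δ * (p.2 * ‖v‖) := by rw [norm_smul, Real.norm_eq_abs, abs_of_pos h5]
    have hlip : dist (f (L (p.1 + p.2 • v))) (f (L p.1 + p.2 • A v))
        ≤ K * dist (L (p.1 + p.2 • v)) (L p.1 + p.2 • A v) :=
      (lipschitzOnWith_iff_dist_le_mul.1 hK) _ h2 _ h4
    have habs : |f (L (p.1 + p.2 • v)) - f (L p.1 + p.2 • A v)| ≤ K * (δ * (p.2 * ‖v‖)) := by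
      rw [← Real.dist_eq]
      exact hlip.trans (mul_le_mul_of_nonneg_left hac K.coe_nonneg)
    have key : f (L (p.1 + p.2 • v)) - f (L p.1)
        ≤ f (L p.1 + p.2 • A v) - f (L p.1) + (K : ℝ) * (δ * (p.2 * ‖v‖)) := by
      have := (abs_le.1 habs).2
      linarith
    have hq : cq (f ∘ L) v p = (f (L (p.1 + p.2 • v)) - f (L p.1)) / p.2 := rfl
    have hq2 : cq f (A v) (m p) = (f (L p.1 + p.2 • A v) - f (L p.1)) / p.2 := rfl
    rw [hq, hq2]
    have h6 : (K : ℝ) * (δ * (p.2 * ‖v‖)) / p.2 = (K : ℝ) * (δ * ‖v‖) := by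
      field_simp
    calc (f (L (p.1 + p.2 • v)) - f (L p.1)) / p.2
        ≤ (f (L p.1 + p.2 • A v) - f (L p.1) + (K : ℝ) * (δ * (p.2 * ‖v‖))) / p.2 := by
          gcongr
      _ = (f (L p.1 + p.2 • A v) - f (L p.1)) / p.2 + (K : ℝ) * (δ * (p.2 * ‖v‖)) / p.2 := by
          rw [add_div]
      _ ≤ (f (L p.1 + p.2 • A v) - f (L p.1)) / p.2 + ε := by
          rw [h6]; linarith
  have hrhs_bdd : (cF u).IsBoundedUnder (· ≤ ·) (fun p => cq f (A v) (m p) + ε) :=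
    ⟨(K : ℝ) * ‖A v‖ + ε, hbg.mono fun p hp => add_le_add_left (abs_le.1 hp).2 ε⟩
  calc clarkeDeriv (f ∘ L) u v = Filter.limsup (cq (f ∘ L) v) (cF u) := rfl
    _ ≤ Filter.limsup (fun p => cq f (A v) (m p) + ε) (cF u) :=
        Filter.limsup_le_limsup hev (ev_cobdd hblhs) hrhs_bdd
    _ = Filter.limsup (fun p => cq f (A v) (m p)) (cF u) + ε :=
        limsup_add_const (cF u) _ ε (ev_bddAbove hbg) (ev_cobdd hbg)
    _ ≤ clarkeDeriv f x (A v) + ε :=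
        add_le_add_left (clarkeDeriv_comp_le hs hK (A v) hm) ε

end PartA

theorem stmt17 {m n : ℕ} (f : EuclideanSpace ℝ (Fin n) → ℝ)
    (L : EuclideanSpace ℝ (Fin m) → EuclideanSpace ℝ (Fin n))
    (u : EuclideanSpace ℝ (Fin m)) (x : EuclideanSpace ℝ (Fin n)) (hx : L u = x)
    (hL : ContDiffAt ℝ 1 L u)
    (hf : ∃ s ∈ nhds x, ∃ K : NNReal, LipschitzOnWith K f s) :
    (∀ v, clarkeDeriv (f ∘ L) u v ≤ clarkeDeriv f x (fderiv ℝ L u v)) ∧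
    clarkeSubdiff (f ∘ L) u ⊆
      {η | ∃ ξ ∈ clarkeSubdiff f x, ∀ w, (inner ℝ η w : ℝ) = (inner ℝ ξ (fderiv ℝ L u w) : ℝ)} := by
  obtain ⟨s, hs, K, hK⟩ := hf
  have hstrict : HasStrictFDerivAt L (fderiv ℝ L u) u := hL.hasStrictFDerivAt one_ne_zero
  have hApart : ∀ v, clarkeDeriv (f ∘ L) u v ≤ clarkeDeriv f x (fderiv ℝ L u v) :=
    fun v => partA hx hstrict hs hK v
  refine ⟨hApart, ?_⟩
  intro η hη
  set A : EuclideanSpace ℝ (Fin m) →L[ℝ] EuclideanSpace ℝ (Fin n) := fderiv ℝ L u with hA_def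
  set Aₗ : EuclideanSpace ℝ (Fin m) →ₗ[ℝ] EuclideanSpace ℝ (Fin n) := A.toLinearMap with hAl_def
  set ηℓ : EuclideanSpace ℝ (Fin m) →ₗ[ℝ] ℝ := (innerSL ℝ η).toLinearMap with hηl_def
  have hηl_apply : ∀ w, ηℓ w = (inner ℝ η w : ℝ) := fun w => rfl
  have hker : ∀ k, Aₗ k = 0 → ηℓ k = 0 := by
    intro k hk
    have hAk : A k = 0 := hk
    have h1 : (inner ℝ η k : ℝ) ≤ clarkeDeriv f x (A k) := (hη k).trans (hApart k)
    have h2 : (inner ℝ η (-k) : ℝ) ≤ clarkeDeriv f x (A (-k)) := (hη (-k)).trans (hApart (-k))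
    rw [hAk, clarkeDeriv_zero] at h1
    rw [map_neg, hAk, neg_zero, clarkeDeriv_zero, inner_neg_right] at h2
    rw [hηl_apply]
    linarith
  set W := LinearMap.range Aₗ with hW_def
  set Ar := Aₗ.rangeRestrict with hAr_def
  obtain ⟨σ, hσ⟩ := Ar.exists_rightInverse_of_surjective (LinearMap.range_rangeRestrict Aₗ)
  have hσ' : ∀ w : W, Aₗ (σ w) = (w : EuclideanSpace ℝ (Fin n)) := by
    intro w
    have h1 : Ar (σ w) = w := by
      rw [← LinearMap.comp_apply, hσ]; rfl
    have h2 := congrArg Subtype.val h1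
    rw [hAr_def] at h2
    simpa [LinearMap.rangeRestrict, LinearMap.codRestrict_apply] using h2
  set φ : W →ₗ[ℝ] ℝ := ηℓ.comp σ with hφ_def
  set pm : EuclideanSpace ℝ (Fin n) →ₗ.[ℝ] ℝ := ⟨W, φ⟩ with hpm_def
  have hface : ∀ w : pm.domain, pm w ≤ clarkeDeriv f x w := by
    intro w
    have h1 : pm w = (inner ℝ η (σ w) : ℝ) := rfl
    have h2 : (inner ℝ η (σ w) : ℝ) ≤ clarkeDeriv f x (A (σ w)) :=
      (hη (σ w)).trans (hApart (σ w))
    have h3 : A (σ w) = (w : EuclideanSpace ℝ (Fin n)) := hσ' w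
    rw [h1, ← h3]
    exact h2
  obtain ⟨g, hg1, hg2⟩ := exists_extension_of_le_sublinear pm (fun z => clarkeDeriv f x z)
    (fun c hc z => clarkeDeriv_smul hs hK hc z)
    (fun z w => clarkeDeriv_add_le hs hK z w) hface
  set ξ : EuclideanSpace ℝ (Fin n) :=
    (InnerProductSpace.toDual ℝ (EuclideanSpace ℝ (Fin n))).symm
      (LinearMap.toContinuousLinearMap g) with hξ_def
  have hξ : ∀ z, (inner ℝ ξ z : ℝ) = g z := by
    intro z
    rw [hξ_def]
    rw [InnerProductSpace.toDual_symm_apply]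
    simp
  refine ⟨ξ, fun z => by rw [hξ z]; exact hg2 z, fun w => ?_⟩
  have e : pm.domain := Ar w
  have hcoe : ((Ar w : pm.domain) : EuclideanSpace ℝ (Fin n)) = A w := by
    rw [hAr_def]
    simp [LinearMap.rangeRestrict, LinearMap.codRestrict_apply, hAl_def]
  have hgA : g (A w) = φ (Ar w) := by
    rw [← hcoe]
    exact hg1 (Ar w)
  have hkerdiff : ηℓ (σ (Ar w) - w) = 0 := by
    apply hker
    rw [map_sub, hσ' (Ar w), hcoe]
    simp [hAl_def]
  have hφw : φ (Ar w) = ηℓ w := by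
    have := hkerdiff
    rw [map_sub, sub_eq_zero] at this
    exact this
  rw [hξ (A w), hgA, hφw, hηl_apply]
end
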